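/- One-step improvement inequality (inequality (26) in the proof of Lemma 2): let π and π' be policies such that for every state s, J_π(π', s) ≥ J_π(π, s). Then q^d_π(s,a) ≤ (T^{π'} q^d_π)(s,a) for all state-action pairs (s,a). -/

import Mathlib

open Finset Filter Topology

def IsPolicy {S A : Type*} [Fintype A] (pi : S → A → ℝ) : Prop :=
  (∀ s a, 0 ≤ pi s a) ∧ (∀ s, ∑ a, pi s a = 1)

def IsKernel {S A : Type*} [Fintype S] (p : S → A → S → ℝ) : Prop :=
  (∀ s a s', 0 ≤ p s a s') ∧ (∀ s a, ∑ s', p s a s' = 1)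

noncomputable def klPen {S A : Type*} [Fintype A]
    (πb π : S → A → ℝ) (s : S) : ℝ :=
  ∑ a, π s a * Real.log (π s a / πb s a)

noncomputable def bellman {S A : Type*} [Fintype S] [Fintype A]
    (p : S → A → S → ℝ) (r : S → A → ℝ) (γ τ : ℝ) (πb π : S → A → ℝ)
    (q : S × A → ℝ) : S × A → ℝ :=
  fun sa => r sa.1 sa.2 + γ * ∑ s', p sa.1 sa.2 s' *
    ((∑ a', π s' a' * q (s', a')) - τ * klPen πb π s')

noncomputable def supNorm {X : Type*} [Fintype X] [Nonempty X] (f : X → ℝ) : ℝ :=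
  Finset.univ.sup' Finset.univ_nonempty (fun x => |f x|)

noncomputable def Jobj {S A : Type*} [Fintype A]
    (τ : ℝ) (πb : S → A → ℝ) (qd : S × A → ℝ) (πt : S → A → ℝ) (s : S) : ℝ :=
  (∑ a, πt s a * qd (s, a)) - τ * klPen πb πt s

theorem stmt7 {S A : Type*} [Fintype S] [Fintype A] [Nonempty S] [Nonempty A]
    (p : S → A → S → ℝ) (hp : IsKernel p)
    (r : S → A → ℝ) (γ τ : ℝ) (hγ0 : 0 ≤ γ) (hγ1 : γ < 1) (hτ : 0 ≤ τ)
    (πb : S → A → ℝ) (hπb : IsPolicy πb) (hπbpos : ∀ s a, 0 < πb s a)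
    (π : S → A → ℝ) (hπ : IsPolicy π)
    (π' : S → A → ℝ) (hπ' : IsPolicy π')
    (qd : S × A → ℝ) (hqd : bellman p r γ τ πb π qd = qd)
    (himp : ∀ s : S, Jobj τ πb qd π s ≤ Jobj τ πb qd π' s) :
    ∀ sa : S × A, qd sa ≤ bellman p r γ τ πb π' qd sa := by
  intro sa
  conv_lhs => rw [← hqd]
  unfold bellman
  apply add_le_add_right
  apply mul_le_mul_of_nonneg_left _ hγ0
  apply Finset.sum_le_sum
  intro s' _
  apply mul_le_mul_of_nonneg_left _ (hp.1 sa.1 sa.2 s')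
  exact himp s'
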